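/- arXiv:1302.4660 — 2 statements merged into one kernel-verified Lean document; each statement's English description precedes it below -/
import Mathlib

section
/- (Multiclass diversity order.) Consider L ≥ 3 zero-mean classes and the union–Bhattacharyya upper bound P̄_err(σ²) = Σ_{i=1}^{L} Σ_{j ≠ i} P_i · sqrt(P_i·P_j) · exp(−K_{ij}(σ²)). If for every pair i ≠ j one has r_i + r_j < 2·r_{ij}, then lim_{σ² → 0+} log P̄_err(σ²) / log σ² = min_{i ≠ j} (2·r_{ij} − r_i − r_j)/4; i.e., the diversity order of the multiclass bound equals the smallest pairwise diversity order. -/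
open Matrix MeasureTheory Filter Real Topology

/-- Pseudo-determinant of a real square matrix: the product of the nonzero
eigenvalues when the matrix is Hermitian (symmetric), with the empty product
equal to 1; junk value 0 otherwise. -/
noncomputable def pdet {n : ℕ} (A : Matrix (Fin n) (Fin n) ℝ) : ℝ :=
  if h : A.IsHermitian then
    ∏ i ∈ Finset.univ.filter (fun i => h.eigenvalues i ≠ 0), h.eigenvalues i
  else 0

/-- Bhattacharyya exponent `K(σ²)` for the two-class compressive
classification problem, as a function of the noise level `s = σ²`. -/
noncomputable def Kb {M N : ℕ} (Φ : Matrix (Fin M) (Fin N) ℝ)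
    (S1 S2 : Matrix (Fin N) (Fin N) ℝ) (μ1 μ2 : Fin N → ℝ) (s : ℝ) : ℝ :=
  1/8 * ((Φ *ᵥ (μ1 - μ2)) ⬝ᵥ
      (((1/2 : ℝ) • (Φ * (S1 + S2) * Φᵀ + s • (1 : Matrix (Fin M) (Fin M) ℝ)))⁻¹
        *ᵥ (Φ *ᵥ (μ1 - μ2))))
  + 1/2 * Real.log
      (((1/2 : ℝ) • (Φ * (S1 + S2) * Φᵀ + s • (1 : Matrix (Fin M) (Fin M) ℝ))).det /
        Real.sqrt ((Φ * S1 * Φᵀ + s • (1 : Matrix (Fin M) (Fin M) ℝ)).det *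
          (Φ * S2 * Φᵀ + s • (1 : Matrix (Fin M) (Fin M) ℝ)).det))

/-- Bhattacharyya upper bound `P̄_err(σ²)` to the misclassification probability. -/
noncomputable def Perr {M N : ℕ} (Φ : Matrix (Fin M) (Fin N) ℝ)
    (S1 S2 : Matrix (Fin N) (Fin N) ℝ) (μ1 μ2 : Fin N → ℝ) (P1 P2 : ℝ) (s : ℝ) : ℝ :=
  Real.sqrt (P1 * P2) * Real.exp (-(Kb Φ S1 S2 μ1 μ2 s))

/-- Union–Bhattacharyya upper bound to the misclassification probability for
`L` zero-mean classes:
`P̄_err(σ²) = Σ_i Σ_{j ≠ i} P_i sqrt(P_i P_j) exp (-K_ij(σ²))`. -/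
noncomputable def PerrMulti {M N L : ℕ} (Φ : Matrix (Fin M) (Fin N) ℝ)
    (S : Fin L → Matrix (Fin N) (Fin N) ℝ) (P : Fin L → ℝ) (s : ℝ) : ℝ :=
  ∑ i, ∑ j ∈ Finset.univ.erase i,
    P i * Real.sqrt (P i * P j) * Real.exp (-(Kb Φ (S i) (S j) 0 0 s))

lemma det_add_smul_one {M : ℕ} {A : Matrix (Fin M) (Fin M) ℝ} (hA : A.IsHermitian) (s : ℝ) :
    (A + s • (1 : Matrix (Fin M) (Fin M) ℝ)).det = ∏ i, (hA.eigenvalues i + s) := by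
  have hU := (Matrix.mem_unitaryGroup_iff).mp (hA.eigenvectorUnitary).2
  have h1 : A + s • 1 = (hA.eigenvectorUnitary : Matrix (Fin M) (Fin M) ℝ) *
      (diagonal (fun i => hA.eigenvalues i + s)) *
      (star (hA.eigenvectorUnitary : Matrix (Fin M) (Fin M) ℝ)) := by
    conv_lhs => rw [hA.spectral_theorem]
    have : (diagonal (fun i => hA.eigenvalues i + s)) =
        diagonal (RCLike.ofReal ∘ hA.eigenvalues) + s • 1 := by
      rw [Matrix.smul_one_eq_diagonal, ← diagonal_add]
      rfl
    rw [this, Matrix.mul_add, Matrix.add_mul]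
    congr 1
    rw [Matrix.mul_smul, Matrix.mul_one, Matrix.smul_mul, hU]
  rw [h1, Matrix.det_mul_right_comm, hU, Matrix.one_mul, det_diagonal]

lemma det_factor {M : ℕ} {B : Matrix (Fin M) (Fin M) ℝ} (hB : B.PosSemidef) :
    ∃ g : ℝ → ℝ, (∀ s, 0 ≤ s → 0 < g s) ∧ Continuous g ∧
      ∀ s : ℝ, (B + s • (1 : Matrix (Fin M) (Fin M) ℝ)).det = g s * s ^ (M - B.rank) := by
  classical
  set lam := hB.1.eigenvalues with hlam
  set T := Finset.univ.filter (fun i => lam i ≠ 0) with hT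
  refine ⟨fun s => ∏ i ∈ T, (lam i + s), ?_, ?_, ?_⟩
  · intro s hs
    apply Finset.prod_pos
    intro i hi
    have h0 : lam i ≠ 0 := (Finset.mem_filter.mp hi).2
    have h1 : 0 ≤ lam i := hB.eigenvalues_nonneg i
    have : 0 < lam i := lt_of_le_of_ne h1 (Ne.symm h0)
    linarith
  · exact continuous_finset_prod _ (fun i _ => continuous_const.add continuous_id)
  · intro s
    have hcard : T.card = B.rank := by
      rw [hB.1.rank_eq_card_non_zero_eigs, Fintype.card_subtype]
    have hz : (Finset.univ.filter (fun i => ¬ lam i ≠ 0)).card = M - B.rank := by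
      have := Finset.card_filter_add_card_filter_not (s := (Finset.univ : Finset (Fin M)))
        (p := fun i => lam i ≠ 0)
      rw [Finset.card_univ, Fintype.card_fin, ← hT, hcard] at this
      omega
    rw [det_add_smul_one hB.1 s, ← Finset.prod_filter_mul_prod_filter_not Finset.univ
      (fun i => lam i ≠ 0)]
    congr 1
    calc ∏ i ∈ Finset.univ.filter (fun i => ¬ lam i ≠ 0), (lam i + s)
        = ∏ i ∈ Finset.univ.filter (fun i => ¬ lam i ≠ 0), s := by
          apply Finset.prod_congr rfl
          intro i hi
          have : lam i = 0 := not_not.mp (Finset.mem_filter.mp hi).2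
          rw [this, zero_add]
      _ = s ^ (M - B.rank) := by rw [Finset.prod_const, hz]

lemma psd_conj {M N : ℕ} (Φ : Matrix (Fin M) (Fin N) ℝ) {S : Matrix (Fin N) (Fin N) ℝ}
    (hS : S.PosSemidef) : (Φ * S * Φᵀ).PosSemidef := by
  have := hS.mul_mul_conjTranspose_same Φ
  simpa using this

lemma pair_asymp {M N : ℕ} (Φ : Matrix (Fin M) (Fin N) ℝ) {S1 S2 : Matrix (Fin N) (Fin N) ℝ}
    (h1 : S1.PosSemidef) (h2 : S2.PosSemidef) :
    ∃ c : ℝ, 0 < c ∧ Filter.Tendsto (fun s : ℝ => Real.exp (-(Kb Φ S1 S2 0 0 s)) *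
      s ^ (-((2 * ((Φ * (S1 + S2) * Φᵀ).rank : ℝ) - ((Φ * S1 * Φᵀ).rank : ℝ)
          - ((Φ * S2 * Φᵀ).rank : ℝ)) / 4))) (𝓝[>] (0:ℝ)) (𝓝 c) := by
  classical
  set A1 := Φ * S1 * Φᵀ with hA1
  set A2 := Φ * S2 * Φᵀ with hA2
  set A12 := Φ * (S1 + S2) * Φᵀ with hA12
  have hP1 : A1.PosSemidef := psd_conj Φ h1
  have hP2 : A2.PosSemidef := psd_conj Φ h2
  have hP12 : A12.PosSemidef := psd_conj Φ (h1.add h2)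
  obtain ⟨g1, hg1pos, hg1c, hg1⟩ := det_factor hP1
  obtain ⟨g2, hg2pos, hg2c, hg2⟩ := det_factor hP2
  obtain ⟨g12, hg12pos, hg12c, hg12⟩ := det_factor hP12
  set r1 := A1.rank
  set r2 := A2.rank
  set r12 := A12.rank
  have hr1M : r1 ≤ M := by simpa using A1.rank_le_card_height
  have hr2M : r2 ≤ M := by simpa using A2.rank_le_card_height
  have hr12M : r12 ≤ M := by simpa using A12.rank_le_card_height
  set d : ℝ := (2 * (r12:ℝ) - (r1:ℝ) - (r2:ℝ)) / 4 with hd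
  set F : ℝ → ℝ := fun s => Real.exp (-(1/2) * ((M:ℝ) * Real.log (1/2)
      + Real.log (g12 s) - (1/2) * Real.log (g1 s) - (1/2) * Real.log (g2 s))) with hF
  refine ⟨F 0, Real.exp_pos _, ?_⟩
  have hkey : ∀ s : ℝ, 0 < s →
      Real.exp (-(Kb Φ S1 S2 0 0 s)) * s ^ (-d) = F s := by
    intro s hs
    have hspow : ∀ n : ℕ, (0:ℝ) < s ^ n := fun n => pow_pos hs n
    have hu : 0 < g12 s := hg12pos s hs.le
    have hv : 0 < g1 s := hg1pos s hs.le
    have hw : 0 < g2 s := hg2pos s hs.le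
    have hKb : Kb Φ S1 S2 0 0 s = 1/2 * Real.log ((1/2)^M * (g12 s * s ^ (M - r12)) /
        Real.sqrt ((g1 s * s ^ (M - r1)) * (g2 s * s ^ (M - r2)))) := by
      rw [Kb]
      rw [show ((0:Fin N → ℝ) - 0) = 0 by simp, Matrix.mulVec_zero, zero_dotProduct,
        Matrix.det_smul, hg12, hg1, hg2]
      simp [Fintype.card_fin]
    have hlogD : Real.log ((1/2:ℝ)^M * (g12 s * s ^ (M - r12)) /
        Real.sqrt ((g1 s * s ^ (M - r1)) * (g2 s * s ^ (M - r2)))) =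
        (M:ℝ) * Real.log (1/2) + Real.log (g12 s) + ((M:ℝ) - r12) * Real.log s
          - (1/2) * (Real.log (g1 s) + ((M:ℝ) - r1) * Real.log s
            + Real.log (g2 s) + ((M:ℝ) - r2) * Real.log s) := by
      have e2 : Real.log ((1/2:ℝ)^M * (g12 s * s ^ (M - r12))) =
          (M:ℝ) * Real.log (1/2) + (Real.log (g12 s) + ((M:ℝ) - r12) * Real.log s) := by
        rw [Real.log_mul (by positivity) (by positivity),
          Real.log_mul (by positivity) (by positivity), Real.log_pow, Real.log_pow,
          Nat.cast_sub hr12M]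
      have e3 : Real.log (g1 s * s ^ (M - r1)) =
          Real.log (g1 s) + ((M:ℝ) - r1) * Real.log s := by
        rw [Real.log_mul (by positivity) (by positivity), Real.log_pow, Nat.cast_sub hr1M]
      have e4 : Real.log (g2 s * s ^ (M - r2)) =
          Real.log (g2 s) + ((M:ℝ) - r2) * Real.log s := by
        rw [Real.log_mul (by positivity) (by positivity), Real.log_pow, Nat.cast_sub hr2M]
      rw [Real.log_div (by positivity) (by positivity), Real.log_sqrt (by positivity), e2,
        Real.log_mul (by positivity) (by positivity), e3, e4]
      ring
    rw [Real.rpow_def_of_pos hs, ← Real.exp_add, hKb, hlogD, hF]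
    congr 1
    rw [hd]
    ring
  have hFt : Filter.Tendsto F (𝓝[>] (0:ℝ)) (𝓝 (F 0)) := by
    apply Filter.Tendsto.mono_left _ nhdsWithin_le_nhds
    apply ContinuousAt.tendsto
    apply Real.continuous_exp.continuousAt.comp
    apply ContinuousAt.mul continuousAt_const
    apply ContinuousAt.sub
    apply ContinuousAt.sub
    apply ContinuousAt.add continuousAt_const
    · exact (Real.continuousAt_log (ne_of_gt (hg12pos 0 le_rfl))).comp hg12c.continuousAt
    · exact continuousAt_const.mul
        ((Real.continuousAt_log (ne_of_gt (hg1pos 0 le_rfl))).comp hg1c.continuousAt)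
    · exact continuousAt_const.mul
        ((Real.continuousAt_log (ne_of_gt (hg2pos 0 le_rfl))).comp hg2c.continuousAt)
  refine hFt.congr' ?_
  filter_upwards [self_mem_nhdsWithin] with s hs
  exact (hkey s hs).symm

lemma rpow_tendsto_ind {e : ℝ} (he : 0 ≤ e) :
    Filter.Tendsto (fun s : ℝ => s ^ e) (𝓝[>] (0:ℝ)) (𝓝 (if e = 0 then 1 else 0)) := by
  rcases eq_or_lt_of_le he with h | h
  · simp only [← h, Real.rpow_zero, if_pos rfl]
    exact tendsto_const_nhds
  · rw [if_neg (ne_of_gt h)]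
    have hcg : Filter.Tendsto (fun s : ℝ => Real.exp (Real.log s * e)) (𝓝[>] (0:ℝ)) (𝓝 0) :=
      Real.tendsto_exp_atBot.comp (Real.tendsto_log_nhdsGT_zero.atBot_mul_const h)
    refine hcg.congr' ?_
    filter_upwards [self_mem_nhdsWithin] with s hs
    exact (Real.rpow_def_of_pos hs e).symm

/-- Multiclass diversity order: with `L ≥ 3` zero-mean classes, if
`r_i + r_j < 2 r_ij` for every pair `i ≠ j`, then
`lim_{σ²→0⁺} log P̄_err(σ²) / log σ² = min_{i ≠ j} (2 r_ij - r_i - r_j)/4`,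
the smallest pairwise diversity order. -/
theorem multiclass_diversity_order (M N L : ℕ) (hM : 0 < M) (hN : 0 < N) (hL : 3 ≤ L)
    (Φ : Matrix (Fin M) (Fin N) ℝ) (S : Fin L → Matrix (Fin N) (Fin N) ℝ)
    (hS : ∀ i, (S i).PosSemidef)
    (P : Fin L → ℝ) (hP : ∀ i, 0 < P i) (hPsum : ∑ i, P i = 1)
    (hrank : ∀ i j : Fin L, i ≠ j →
      (Φ * S i * Φᵀ).rank + (Φ * S j * Φᵀ).rank < 2 * (Φ * (S i + S j) * Φᵀ).rank) :
    Filter.Tendsto (fun s : ℝ => Real.log (PerrMulti Φ S P s) / Real.log s) (𝓝[>] 0)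
      (𝓝 (sInf {d : ℝ | ∃ i j : Fin L, i ≠ j ∧
        d = (2 * ((Φ * (S i + S j) * Φᵀ).rank : ℝ) - ((Φ * S i * Φᵀ).rank : ℝ)
          - ((Φ * S j * Φᵀ).rank : ℝ)) / 4})) := by
  classical
  haveI : Nontrivial (Fin L) := Fin.nontrivial_iff_two_le.mpr (by omega)
  set dij : Fin L × Fin L → ℝ := fun p =>
    (2 * ((Φ * (S p.1 + S p.2) * Φᵀ).rank : ℝ) - ((Φ * S p.1 * Φᵀ).rank : ℝ)
      - ((Φ * S p.2 * Φᵀ).rank : ℝ)) / 4 with hdij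
  set T : Finset (Fin L × Fin L) := Finset.univ.filter (fun p => p.1 ≠ p.2) with hT
  obtain ⟨a0, b0, hab⟩ := exists_pair_ne (Fin L)
  have hTne : T.Nonempty :=
    ⟨(a0, b0), Finset.mem_filter.mpr ⟨Finset.mem_univ _, hab⟩⟩
  set dstar : ℝ := T.inf' hTne dij with hdstar
  -- the infimum of the set equals dstar
  have hInf : sInf {d : ℝ | ∃ i j : Fin L, i ≠ j ∧
      d = (2 * ((Φ * (S i + S j) * Φᵀ).rank : ℝ) - ((Φ * S i * Φᵀ).rank : ℝ)
        - ((Φ * S j * Φᵀ).rank : ℝ)) / 4} = dstar := by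
    apply IsLeast.csInf_eq
    constructor
    · obtain ⟨p, hpT, hpe⟩ := Finset.exists_mem_eq_inf' hTne dij
      exact ⟨p.1, p.2, (Finset.mem_filter.mp hpT).2, hpe⟩
    · rintro x ⟨i, j, hij, rfl⟩
      exact Finset.inf'_le dij (Finset.mem_filter.mpr ⟨Finset.mem_univ (i, j), hij⟩)
  rw [hInf]
  -- per-pair constants
  have hpa := fun p : Fin L × Fin L => pair_asymp Φ (hS p.1) (hS p.2)
  choose c hcpos hct using hpa
  set w : Fin L × Fin L → ℝ := fun p => P p.1 * Real.sqrt (P p.1 * P p.2) with hw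
  have hwpos : ∀ p : Fin L × Fin L, 0 < w p := by
    intro p
    exact mul_pos (hP p.1) (Real.sqrt_pos.mpr (mul_pos (hP p.1) (hP p.2)))
  set C : ℝ := ∑ i, ∑ j ∈ Finset.univ.erase i,
    w (i, j) * c (i, j) * (if dij (i, j) - dstar = 0 then 1 else 0) with hC
  have hdle : ∀ i j : Fin L, j ≠ i → dstar ≤ dij (i, j) := by
    intro i j hji
    exact Finset.inf'_le dij (Finset.mem_filter.mpr ⟨Finset.mem_univ (i, j), hji.symm⟩)
  have hCpos : 0 < C := by
    obtain ⟨p0, hp0T, hp0⟩ := Finset.exists_mem_eq_inf' hTne dij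
    have hp0ne : p0.1 ≠ p0.2 := (Finset.mem_filter.mp hp0T).2
    rw [hC]
    apply Finset.sum_pos'
    · intro i _
      apply Finset.sum_nonneg
      intro j _
      have := (hwpos (i, j)).le
      have := (hcpos (i, j)).le
      positivity
    · refine ⟨p0.1, Finset.mem_univ _, ?_⟩
      apply Finset.sum_pos'
      · intro j _
        have := (hwpos (p0.1, j)).le
        have := (hcpos (p0.1, j)).le
        positivity
      · refine ⟨p0.2, Finset.mem_erase.mpr ⟨hp0ne.symm, Finset.mem_univ _⟩, ?_⟩
        have : dij (p0.1, p0.2) - dstar = 0 := by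
          rw [Prod.mk.eta, hdstar, hp0, sub_self]
        rw [if_pos this, mul_one]
        exact mul_pos (hwpos _) (hcpos _)
  -- convergence of the rescaled sum
  have hGt : Filter.Tendsto (fun s : ℝ => PerrMulti Φ S P s * s ^ (-dstar))
      (𝓝[>] (0:ℝ)) (𝓝 C) := by
    have hH : Filter.Tendsto (fun s : ℝ => ∑ i, ∑ j ∈ Finset.univ.erase i,
        w (i, j) * (Real.exp (-(Kb Φ (S i) (S j) 0 0 s)) * s ^ (-(dij (i, j)))) *
          s ^ (dij (i, j) - dstar)) (𝓝[>] (0:ℝ)) (𝓝 C) := by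
      rw [hC]
      apply tendsto_finset_sum
      intro i _
      apply tendsto_finset_sum
      intro j hj
      have hji : j ≠ i := (Finset.mem_erase.mp hj).1
      have he : 0 ≤ dij (i, j) - dstar := sub_nonneg.mpr (hdle i j hji)
      have h1 : Filter.Tendsto (fun s : ℝ => w (i, j) *
          (Real.exp (-(Kb Φ (S i) (S j) 0 0 s)) * s ^ (-(dij (i, j)))))
          (𝓝[>] (0:ℝ)) (𝓝 (w (i, j) * c (i, j))) := (hct (i, j)).const_mul _
      have h2 := rpow_tendsto_ind he
      simpa using h1.mul h2
    refine hH.congr' ?_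
    filter_upwards [self_mem_nhdsWithin] with s hs
    rw [PerrMulti, Finset.sum_mul]
    apply Finset.sum_congr rfl
    intro i _
    rw [Finset.sum_mul]
    apply Finset.sum_congr rfl
    intro j _
    have hpows : (s:ℝ) ^ (-dij (i, j)) * s ^ (dij (i, j) - dstar) = s ^ (-dstar) := by
      rw [← Real.rpow_add hs]
      ring_nf
    rw [mul_assoc (w (i, j)), mul_assoc (Real.exp (-(Kb Φ (S i) (S j) 0 0 s))), hpows]
    simp only [hw]
    ring
  -- positivity of PerrMulti
  have hPpos : ∀ s : ℝ, 0 < PerrMulti Φ S P s := by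
    intro s
    rw [PerrMulti]
    apply Finset.sum_pos'
    · intro i _
      apply Finset.sum_nonneg
      intro j _
      have h1 := (hP i).le
      have h2 : 0 ≤ Real.sqrt (P i * P j) := Real.sqrt_nonneg _
      positivity
    · refine ⟨a0, Finset.mem_univ _, ?_⟩
      apply Finset.sum_pos'
      · intro k _
        have h1 := (hP a0).le
        have h2 : 0 ≤ Real.sqrt (P a0 * P k) := Real.sqrt_nonneg _
        positivity
      · refine ⟨b0, Finset.mem_erase.mpr ⟨hab.symm, Finset.mem_univ _⟩, ?_⟩
        exact mul_pos (mul_pos (hP a0) (Real.sqrt_pos.mpr (mul_pos (hP a0) (hP b0))))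
          (Real.exp_pos _)
  -- pass to logs
  have hlogG : Filter.Tendsto (fun s : ℝ => Real.log (PerrMulti Φ S P s * s ^ (-dstar)))
      (𝓝[>] (0:ℝ)) (𝓝 (Real.log C)) :=
    ((Real.continuousAt_log hCpos.ne').tendsto).comp hGt
  have hloginv : Filter.Tendsto (fun s : ℝ => (Real.log s)⁻¹) (𝓝[>] (0:ℝ)) (𝓝 0) := by
    have h1 : Filter.Tendsto (fun s : ℝ => -Real.log s) (𝓝[>] (0:ℝ)) atTop :=
      tendsto_neg_atBot_atTop.comp Real.tendsto_log_nhdsGT_zero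
    have h2 := h1.inv_tendsto_atTop
    have h3 : Filter.Tendsto (fun s : ℝ => -(-Real.log s)⁻¹) (𝓝[>] (0:ℝ)) (𝓝 (-0)) := h2.neg
    rw [neg_zero] at h3
    refine h3.congr fun s => ?_
    rw [inv_neg, neg_neg]
  have hratio : Filter.Tendsto (fun s : ℝ =>
      Real.log (PerrMulti Φ S P s * s ^ (-dstar)) / Real.log s) (𝓝[>] (0:ℝ)) (𝓝 0) := by
    have := hlogG.mul hloginv
    simpa [div_eq_mul_inv] using this
  have hfin : Filter.Tendsto (fun s : ℝ =>
      Real.log (PerrMulti Φ S P s * s ^ (-dstar)) / Real.log s + dstar)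
      (𝓝[>] (0:ℝ)) (𝓝 dstar) := by
    have := hratio.add (tendsto_const_nhds (x := dstar))
    simpa using this
  refine hfin.congr' ?_
  filter_upwards [Ioo_mem_nhdsGT_of_mem (Set.left_mem_Ico.mpr one_pos)] with s hs
  obtain ⟨hs0, hs1⟩ := hs
  have hlogs : Real.log s ≠ 0 := ne_of_lt (Real.log_neg hs0 hs1)
  have hlm : Real.log (PerrMulti Φ S P s * s ^ (-dstar)) =
      Real.log (PerrMulti Φ S P s) + (-dstar) * Real.log s := by
    rw [Real.log_mul (hPpos s).ne' (by positivity), Real.log_rpow hs0]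
  rw [hlm]
  field_simp
  ring
end

section
/- (Multiclass error floor.) Consider L ≥ 3 zero-mean classes and the union–Bhattacharyya upper bound P̄_err(σ²) = Σ_{i=1}^{L} Σ_{j ≠ i} P_i · sqrt(P_i·P_j) · exp(−K_{ij}(σ²)). If there exists at least one pair i ≠ j with r_i + r_j = 2·r_{ij}, then P̄_err(σ²) converges, as σ² → 0 from the right, to a finite strictly positive limit; in particular the multiclass bound exhibits an error floor. -/
open Matrix MeasureTheory Filter Real Topology

lemma det_add_smul {n : ℕ} {A : Matrix (Fin n) (Fin n) ℝ} (hA : A.IsHermitian) (s : ℝ) :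
    (A + s • 1).det = ∏ i, (hA.eigenvalues i + s) := by
  set U : Matrix (Fin n) (Fin n) ℝ := (hA.eigenvectorUnitary : Matrix (Fin n) (Fin n) ℝ) with hU
  have hUU : U * star U = 1 := Matrix.mem_unitaryGroup_iff.mp hA.eigenvectorUnitary.2
  have h1 : A + s • 1 = U * (Matrix.diagonal (fun i => hA.eigenvalues i + s)) * star U := by
    conv_lhs => rw [hA.spectral_theorem, Unitary.conjStarAlgAut_apply]
    have h2 : s • (1 : Matrix (Fin n) (Fin n) ℝ) = U * (s • 1) * star U := by
      rw [Matrix.mul_smul, mul_one, Matrix.smul_mul, hUU]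
    rw [h2, ← Matrix.add_mul, ← Matrix.mul_add, Matrix.smul_one_eq_diagonal,
      Matrix.diagonal_add]
    rfl
  rw [h1, Matrix.det_mul_right_comm, hUU, one_mul, Matrix.det_diagonal]

lemma rank_card {n : ℕ} {B : Matrix (Fin n) (Fin n) ℝ} (hB : B.IsHermitian) :
    B.rank = (Finset.univ.filter (fun i => hB.eigenvalues i ≠ 0)).card := by
  rw [hB.rank_eq_card_non_zero_eigs]
  simp [Fintype.card_subtype]

lemma det_factor_s18 {n : ℕ} {B : Matrix (Fin n) (Fin n) ℝ} (hB : B.PosSemidef) (s : ℝ) :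
    (B + s • 1).det
      = s ^ (n - B.rank) *
        ∏ i ∈ Finset.univ.filter (fun i => hB.1.eigenvalues i ≠ 0), (hB.1.eigenvalues i + s) := by
  rw [det_add_smul hB.1 s,
    ← Finset.prod_filter_mul_prod_filter_not Finset.univ (fun i => hB.1.eigenvalues i ≠ 0)]
  have hc : (Finset.univ.filter (fun i => ¬ hB.1.eigenvalues i ≠ 0)).card = n - B.rank := by
    have := Finset.card_filter_add_card_filter_not
      (s := (Finset.univ : Finset (Fin n))) (p := fun i => hB.1.eigenvalues i ≠ 0)
    rw [rank_card hB.1]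
    simp only [Finset.card_univ, Fintype.card_fin] at this ⊢
    omega
  have h2 : ∏ i ∈ Finset.univ.filter (fun i => ¬ hB.1.eigenvalues i ≠ 0),
      (hB.1.eigenvalues i + s) = s ^ (n - B.rank) := by
    rw [Finset.prod_congr rfl (fun i hi => ?_), Finset.prod_const, hc]
    simp only [Finset.mem_filter, not_not] at hi
    rw [hi.2, zero_add]
  rw [h2, mul_comm]

lemma rank_le_rank_add {n : ℕ} {A B : Matrix (Fin n) (Fin n) ℝ}
    (hA : A.PosSemidef) (hB : B.PosSemidef) : A.rank ≤ (A + B).rank := by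
  have hker : LinearMap.ker (A + B).mulVecLin ≤ LinearMap.ker A.mulVecLin := by
    intro x hx
    simp only [LinearMap.mem_ker, Matrix.mulVecLin_apply] at *
    have h0 : star x ⬝ᵥ (A + B) *ᵥ x = 0 := by rw [hx, dotProduct_zero]
    rw [Matrix.add_mulVec, dotProduct_add] at h0
    have h1 := hA.dotProduct_mulVec_nonneg x
    have h2 := hB.dotProduct_mulVec_nonneg x
    have hA0 : star x ⬝ᵥ A *ᵥ x = 0 := by linarith
    exact (hA.dotProduct_mulVec_zero_iff x).mp hA0
  have h1 := LinearMap.finrank_range_add_finrank_ker (A + B).mulVecLin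
  have h2 := LinearMap.finrank_range_add_finrank_ker A.mulVecLin
  have h3 := Submodule.finrank_mono hker
  unfold Matrix.rank
  omega

lemma scalar_id (M m1 m2 m12 : ℕ) (s b c : ℝ) (hs : 0 < s) (hb : 0 < b) (hc : 0 < c) :
    (((1/2:ℝ)^M * (s^m12 * c)) / (Real.sqrt (s^(m1+m2)) * b))⁻¹
      = s ^ (((m1:ℝ)+m2)/2 - (m12:ℝ)) * ((2:ℝ)^M * b / c) := by
  have hsr : ∀ k : ℕ, s ^ k = s ^ (k:ℝ) := fun k => (Real.rpow_natCast s k).symm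
  have hsqrt : Real.sqrt (s ^ (m1+m2)) = s ^ (((m1:ℝ)+m2)/2) := by
    rw [hsr, Real.sqrt_eq_rpow, ← Real.rpow_mul hs.le]
    push_cast
    ring_nf
  rw [hsqrt, Real.rpow_sub hs, hsr m12]
  have h1 : (0:ℝ) < s ^ (((m1:ℝ)+m2)/2) := Real.rpow_pos_of_pos hs _
  have h2 : (0:ℝ) < s ^ ((m12:ℕ):ℝ) := Real.rpow_pos_of_pos hs _
  have h3 : (0:ℝ) < (2:ℝ)^M := by positivity
  field_simp
  ring
  rw [← mul_pow]; norm_num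

set_option maxHeartbeats 1000000 in
lemma pair_limit {M N : ℕ} (Φ : Matrix (Fin M) (Fin N) ℝ)
    (S1 S2 : Matrix (Fin N) (Fin N) ℝ) (h1 : S1.PosSemidef) (h2 : S2.PosSemidef) :
    ∃ ℓ : ℝ, 0 ≤ ℓ ∧
      Filter.Tendsto (fun s : ℝ => Real.exp (-(Kb Φ S1 S2 0 0 s))) (𝓝[>] 0) (𝓝 ℓ) ∧
      ((Φ * S1 * Φᵀ).rank + (Φ * S2 * Φᵀ).rank = 2 * (Φ * (S1 + S2) * Φᵀ).rank → 0 < ℓ) := by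
  have hA1 : (Φ * S1 * Φᵀ).PosSemidef := by
    simpa using h1.mul_mul_conjTranspose_same Φ
  have hA2 : (Φ * S2 * Φᵀ).PosSemidef := by
    simpa using h2.mul_mul_conjTranspose_same Φ
  set A1 := Φ * S1 * Φᵀ with hA1def
  set A2 := Φ * S2 * Φᵀ with hA2def
  have h12 : Φ * (S1 + S2) * Φᵀ = A1 + A2 := by rw [Matrix.mul_add, Matrix.add_mul]
  have hA12 : (A1 + A2).PosSemidef := hA1.add hA2
  -- eigen products
  set D1 : ℝ → ℝ := fun s =>
    ∏ i ∈ Finset.univ.filter (fun i => hA1.1.eigenvalues i ≠ 0), (hA1.1.eigenvalues i + s) with hD1def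
  set D2 : ℝ → ℝ := fun s =>
    ∏ i ∈ Finset.univ.filter (fun i => hA2.1.eigenvalues i ≠ 0), (hA2.1.eigenvalues i + s) with hD2def
  set D12 : ℝ → ℝ := fun s =>
    ∏ i ∈ Finset.univ.filter (fun i => hA12.1.eigenvalues i ≠ 0), (hA12.1.eigenvalues i + s) with hD12def
  have hD1pos : ∀ s : ℝ, 0 ≤ s → 0 < D1 s := by
    intro s hs
    refine Finset.prod_pos fun i hi => ?_
    have := hA1.eigenvalues_nonneg i
    have hne : hA1.1.eigenvalues i ≠ 0 := (Finset.mem_filter.mp hi).2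
    have : 0 < hA1.1.eigenvalues i := lt_of_le_of_ne this (Ne.symm hne)
    linarith
  have hD2pos : ∀ s : ℝ, 0 ≤ s → 0 < D2 s := by
    intro s hs
    refine Finset.prod_pos fun i hi => ?_
    have := hA2.eigenvalues_nonneg i
    have hne : hA2.1.eigenvalues i ≠ 0 := (Finset.mem_filter.mp hi).2
    have : 0 < hA2.1.eigenvalues i := lt_of_le_of_ne this (Ne.symm hne)
    linarith
  have hD12pos : ∀ s : ℝ, 0 ≤ s → 0 < D12 s := by
    intro s hs
    refine Finset.prod_pos fun i hi => ?_
    have := hA12.eigenvalues_nonneg i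
    have hne : hA12.1.eigenvalues i ≠ 0 := (Finset.mem_filter.mp hi).2
    have : 0 < hA12.1.eigenvalues i := lt_of_le_of_ne this (Ne.symm hne)
    linarith
  have hD1c : Continuous D1 := by
    apply continuous_finset_prod
    exact fun i _ => continuous_const.add continuous_id
  have hD2c : Continuous D2 := by
    apply continuous_finset_prod
    exact fun i _ => continuous_const.add continuous_id
  have hD12c : Continuous D12 := by
    apply continuous_finset_prod
    exact fun i _ => continuous_const.add continuous_id
  set r1 := A1.rank with hr1def
  set r2 := A2.rank with hr2def
  set r12 := (A1 + A2).rank with hr12def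
  set m1 := M - r1 with hm1def
  set m2 := M - r2 with hm2def
  set m12 := M - r12 with hm12def
  have hr1M : r1 ≤ M := A1.rank_le_height
  have hr2M : r2 ≤ M := A2.rank_le_height
  have hr12M : r12 ≤ M := (A1 + A2).rank_le_height
  have hr112 : r1 ≤ r12 := rank_le_rank_add hA1 hA2
  have hr212 : r2 ≤ r12 := by
    have := rank_le_rank_add hA2 hA1
    rwa [add_comm A2 A1] at this
  -- determinant formulas
  have hd1 : ∀ s : ℝ, (A1 + s • 1).det = s ^ m1 * D1 s := fun s => det_factor_s18 hA1 s
  have hd2 : ∀ s : ℝ, (A2 + s • 1).det = s ^ m2 * D2 s := fun s => det_factor_s18 hA2 s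
  have hd12 : ∀ s : ℝ, ((1/2:ℝ) • (A1 + A2 + s • 1)).det
      = (1/2:ℝ)^M * (s ^ m12 * D12 s) := by
    intro s
    rw [Matrix.det_smul, det_factor_s18 hA12 s]
    simp only [Fintype.card_fin]
    rfl
  -- Kb simplification
  have hKb : ∀ s : ℝ, Kb Φ S1 S2 0 0 s
      = 1/2 * Real.log (((1/2:ℝ) • (A1 + A2 + s • 1)).det /
          Real.sqrt ((A1 + s • 1).det * (A2 + s • 1).det)) := by
    intro s
    simp [Kb, h12]
    rfl
  -- target auxiliary function
  set e2 : ℝ := ((m1:ℝ) + m2)/2 - m12 with he2def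
  set H : ℝ → ℝ := fun s => (2:ℝ)^M * Real.sqrt (D1 s * D2 s) / D12 s with hHdef
  have hH0pos : 0 < H 0 := by
    have := hD1pos 0 le_rfl
    have := hD2pos 0 le_rfl
    have := hD12pos 0 le_rfl
    have hs : 0 < Real.sqrt (D1 0 * D2 0) := Real.sqrt_pos.mpr (by positivity)
    positivity
  have hHtend : Filter.Tendsto H (𝓝 0) (𝓝 (H 0)) := by
    apply ContinuousAt.tendsto
    exact ((continuous_const.mul (Real.continuous_sqrt.comp (hD1c.mul hD2c))).continuousAt).div
      hD12c.continuousAt (ne_of_gt (hD12pos 0 le_rfl))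
  -- pointwise formula on Ioi 0
  have hpt : ∀ s ∈ Set.Ioi (0:ℝ), Real.sqrt (s ^ e2 * H s) = Real.exp (-(Kb Φ S1 S2 0 0 s)) := by
    intro s hs
    rw [Set.mem_Ioi] at hs
    have hD1s := hD1pos s hs.le
    have hD2s := hD2pos s hs.le
    have hD12s := hD12pos s hs.le
    set x : ℝ := ((1/2:ℝ) • (A1 + A2 + s • 1)).det /
        Real.sqrt ((A1 + s • 1).det * (A2 + s • 1).det) with hxdef
    have hnum : 0 < ((1/2:ℝ) • (A1 + A2 + s • 1)).det := by
      rw [hd12]; positivity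
    have hden : 0 < Real.sqrt ((A1 + s • 1).det * (A2 + s • 1).det) := by
      rw [hd1, hd2]
      apply Real.sqrt_pos.mpr
      positivity
    have hx : 0 < x := div_pos hnum hden
    have step1 : Real.exp (-(Kb Φ S1 S2 0 0 s)) = x ^ (-(1/2):ℝ) := by
      rw [hKb, Real.rpow_def_of_pos hx]
      congr 1
      ring
    have step2 : x ^ (-(1/2):ℝ) = Real.sqrt x⁻¹ := by
      rw [Real.sqrt_eq_rpow, Real.inv_rpow hx.le, ← Real.rpow_neg hx.le]
    have hxinv : x⁻¹ = s ^ e2 * H s := by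
      have hprod : (A1 + s • 1).det * (A2 + s • 1).det = s ^ (m1 + m2) * (D1 s * D2 s) := by
        rw [hd1, hd2, pow_add]; ring
      rw [hxdef, hd12, hprod, Real.sqrt_mul (by positivity : (0:ℝ) ≤ s ^ (m1+m2))]
      exact scalar_id M m1 m2 m12 s (Real.sqrt (D1 s * D2 s)) (D12 s) hs
        (Real.sqrt_pos.mpr (by positivity)) hD12s
    rw [step1, step2, hxinv]
  -- case split
  by_cases hcase : r1 + r2 = 2 * r12
  · refine ⟨Real.sqrt (H 0), Real.sqrt_nonneg _, ?_, fun _ => Real.sqrt_pos.mpr hH0pos⟩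
    have he2 : e2 = 0 := by
      have hm : m1 + m2 = 2 * m12 := by omega
      have : (m1:ℝ) + m2 = 2 * m12 := by exact_mod_cast hm
      rw [he2def]; linarith
    have htend : Filter.Tendsto (fun s : ℝ => Real.sqrt (s ^ e2 * H s)) (𝓝[>] 0)
        (𝓝 (Real.sqrt (H 0))) := by
      have : Filter.Tendsto (fun s : ℝ => s ^ e2 * H s) (𝓝 0) (𝓝 (H 0)) := by
        simp only [he2, Real.rpow_zero, one_mul]
        exact hHtend
      exact (this.sqrt).mono_left nhdsWithin_le_nhds
    exact tendsto_nhdsWithin_congr hpt htend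
  · refine ⟨0, le_rfl, ?_, fun h => absurd ?_ hcase⟩
    · have he2pos : 0 < e2 := by
        have hlt : r1 + r2 < 2 * r12 := by omega
        have hm : 2 * m12 < m1 + m2 := by omega
        have : (2:ℝ) * m12 < (m1:ℝ) + m2 := by exact_mod_cast hm
        rw [he2def]; linarith
      have hrp : Filter.Tendsto (fun s : ℝ => s ^ e2) (𝓝 0) (𝓝 0) := by
        have := (Real.continuousAt_rpow_const 0 e2 (Or.inr he2pos.le)).tendsto
        rwa [Real.zero_rpow (ne_of_gt he2pos)] at this
      have htend : Filter.Tendsto (fun s : ℝ => Real.sqrt (s ^ e2 * H s)) (𝓝[>] 0) (𝓝 0) := by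
        have : Filter.Tendsto (fun s : ℝ => s ^ e2 * H s) (𝓝 0) (𝓝 (0 * H 0)) :=
          hrp.mul hHtend
        rw [zero_mul] at this
        have := this.sqrt
        rw [Real.sqrt_zero] at this
        exact this.mono_left nhdsWithin_le_nhds
      exact tendsto_nhdsWithin_congr hpt htend
    · rw [h12] at h
      exact h

/-- Multiclass error floor: with `L ≥ 3` zero-mean classes, if there is at
least one pair `i ≠ j` with `r_i + r_j = 2 r_ij`, then the union–Bhattacharyya
bound converges as `σ² → 0⁺` to a finite strictly positive limit; in
particular the multiclass bound exhibits an error floor. -/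
theorem multiclass_error_floor (M N L : ℕ) (hM : 0 < M) (hN : 0 < N) (hL : 3 ≤ L)
    (Φ : Matrix (Fin M) (Fin N) ℝ) (S : Fin L → Matrix (Fin N) (Fin N) ℝ)
    (hS : ∀ i, (S i).PosSemidef)
    (P : Fin L → ℝ) (hP : ∀ i, 0 < P i) (hPsum : ∑ i, P i = 1)
    (hpair : ∃ i j : Fin L, i ≠ j ∧
      (Φ * S i * Φᵀ).rank + (Φ * S j * Φᵀ).rank = 2 * (Φ * (S i + S j) * Φᵀ).rank) :
    ∃ c : ℝ, 0 < c ∧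
      Filter.Tendsto (fun s : ℝ => PerrMulti Φ S P s) (𝓝[>] 0) (𝓝 c) := by
  have key := fun i j : Fin L => pair_limit Φ (S i) (S j) (hS i) (hS j)
  choose ℓ hℓ0 hℓt hℓp using key
  refine ⟨∑ i, ∑ j ∈ Finset.univ.erase i, P i * Real.sqrt (P i * P j) * ℓ i j, ?_, ?_⟩
  · obtain ⟨i0, j0, hij, hrk⟩ := hpair
    have hterm : ∀ i j : Fin L, 0 ≤ P i * Real.sqrt (P i * P j) * ℓ i j := by
      intro i j
      have := hℓ0 i j
      have := (hP i).le
      have := Real.sqrt_nonneg (P i * P j)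
      positivity
    refine Finset.sum_pos' (fun i _ => Finset.sum_nonneg fun j _ => hterm i j)
      ⟨i0, Finset.mem_univ _, ?_⟩
    refine Finset.sum_pos' (fun j _ => hterm i0 j)
      ⟨j0, Finset.mem_erase.mpr ⟨hij.symm, Finset.mem_univ _⟩, ?_⟩
    have hl := hℓp i0 j0 hrk
    have h1 := hP i0
    have h2 := hP j0
    have h3 : 0 < Real.sqrt (P i0 * P j0) := Real.sqrt_pos.mpr (by positivity)
    positivity
  · unfold PerrMulti
    apply tendsto_finset_sum
    intro i _
    apply tendsto_finset_sum
    intro j _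
    exact (hℓt i j).const_mul _
end
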